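/- Let n ≥ 3 and let C be a class of n-vertex simple graphs that is closed under isomorphism, recognisable, and satisfies Kocay's lemma for a finite family 𝔉 = (𝓕_1, …, 𝓕_l) of finite sequences of simple graphs each with fewer than n vertices. Let M be the real matrix with rows indexed by the sequences in 𝔉 and columns indexed by the isomorphism classes of graphs in C, whose (𝓕, [H]) entry is the covering number c(𝓕, H). If rank_ℝ(M) = |C/≅| (the number of isomorphism classes of graphs in C), then every graph in C is reconstructible, i.e., for all G, G' ∈ C, G' ∼ G implies G' ≅ G. -/

import Mathlib

open SimpleGraph

/-- The vertex-deleted subgraph `G − v`: the induced subgraph of `G` obtained by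
deleting `v` and all edges incident with `v`. -/
abbrev vdel {n : ℕ} (G : SimpleGraph (Fin n)) (v : Fin n) :
    SimpleGraph ({v}ᶜ : Set (Fin n)) :=
  G.induce {v}ᶜ

/-- `H` is a reconstruction of `G`: there is a bijection `f` between the vertex
sets such that `G − v ≅ H − f v` for every vertex `v`. -/
def IsReconstruction {n : ℕ} (G H : SimpleGraph (Fin n)) : Prop :=
  ∃ f : Fin n ≃ Fin n, ∀ v : Fin n, Nonempty (vdel G v ≃g vdel H (f v))

/-- `s(F,G)`: the number of subgraphs of `G` isomorphic to `F`. -/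
noncomputable def subCount {k n : ℕ} (F : SimpleGraph (Fin k))
    (G : SimpleGraph (Fin n)) : ℕ :=
  Nat.card {H : G.Subgraph // Nonempty (F ≃g H.coe)}

/-- A finite sequence of simple graphs (on arbitrary finite vertex sets). -/
abbrev GSeq : Type := List (Σ k : ℕ, SimpleGraph (Fin k))

/-- `c(𝓕,G)`: the number of covers of `G` by the sequence `L`, i.e. of sequences
of subgraphs of `G`, the `i`-th being isomorphic to the `i`-th graph of `L`,
whose union (of both vertex sets and edge sets) is all of `G`. -/
noncomputable def coverCount {n : ℕ} (L : GSeq) (G : SimpleGraph (Fin n)) : ℕ :=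
  Nat.card {C : Fin L.length → G.Subgraph //
    (∀ i, Nonempty ((L.get i).2 ≃g (C i).coe)) ∧ (⨆ i, C i) = ⊤}

/-- `R` is a transversal of the isomorphism classes of graphs in `C`:
it contains exactly one representative of each isomorphism class in `C`. -/
def IsIsoTransversal {n : ℕ} (C : Set (SimpleGraph (Fin n)))
    (R : Finset (SimpleGraph (Fin n))) : Prop :=
  ↑R ⊆ C ∧ ∀ G ∈ C, ∃! H, H ∈ R ∧ Nonempty (G ≃g H)

/-- `D` is a transversal of the reconstruction classes of graphs in `C`:
it contains exactly one representative of each `∼`-equivalence class in `C`. -/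
def IsReconTransversal {n : ℕ} (C : Set (SimpleGraph (Fin n)))
    (D : Finset (SimpleGraph (Fin n))) : Prop :=
  ↑D ⊆ C ∧ ∀ G ∈ C, ∃! H, H ∈ D ∧ IsReconstruction G H

/-- Subgraphs of a graph on a finite vertex type form a finite type. -/
instance subgraphFinite {n : ℕ} (G : SimpleGraph (Fin n)) : Finite G.Subgraph := by
  apply Finite.of_injective (fun S => (S.verts, S.Adj))
  intro a b h
  simp only [Prod.mk.injEq] at h
  ext <;> simp [h.1, h.2]

/-- An injective graph hom between graphs on the same finite vertex type with
equal edge counts is (the underlying map of) an isomorphism. -/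
lemma homIso {n : ℕ} {G G' : SimpleGraph (Fin n)} (f : G' →g G)
    (hf : Function.Injective f)
    (hcard : Nat.card G'.edgeSet = Nat.card G.edgeSet) :
    Nonempty (G' ≃g G) := by
  have hbij : Function.Bijective f := (Finite.injective_iff_bijective).mp hf
  have hme : Function.Bijective f.mapEdgeSet :=
    (Nat.bijective_iff_injective_and_card _).mpr
      ⟨Hom.mapEdgeSet.injective f hf, hcard⟩
  refine ⟨⟨Equiv.ofBijective f hbij, ?_⟩⟩
  intro a b
  constructor
  · intro hadj
    obtain ⟨⟨x, hx⟩, hxeq⟩ := hme.2 ⟨s(f a, f b), hadj⟩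
    have hxval : Sym2.map f x = s(f a, f b) := congrArg Subtype.val hxeq
    have : x = s(a, b) := Sym2.map.injective hf (by simp [hxval])
    rw [this] at hx
    exact hx
  · exact fun h => f.map_adj h

/-- If `F ≅ G` then `G` has (at least) a subgraph copy of `F`, namely `⊤`. -/
lemma subCount_ne_zero {k n : ℕ} {F : SimpleGraph (Fin k)} {G : SimpleGraph (Fin n)}
    (h : Nonempty (F ≃g G)) : subCount F G ≠ 0 := by
  obtain ⟨e⟩ := h
  have : Nonempty {H : G.Subgraph // Nonempty (F ≃g H.coe)} :=
    ⟨⟨⊤, ⟨e.trans (Subgraph.topIso).symm⟩⟩⟩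
  rw [subCount, Nat.card_ne_zero]
  exact ⟨this, inferInstance⟩

/-- From a nonzero subgraph count, extract an injective hom. -/
lemma exists_hom_of_subCount {k n : ℕ} {F : SimpleGraph (Fin k)} {G : SimpleGraph (Fin n)}
    (h : subCount F G ≠ 0) : ∃ f : F →g G, Function.Injective f := by
  rw [subCount, Nat.card_ne_zero] at h
  obtain ⟨⟨S, ⟨e⟩⟩⟩ := h.1
  refine ⟨S.hom.comp e.toHom, ?_⟩
  rw [Hom.coe_comp]
  exact Function.Injective.comp Subgraph.hom_injective (Equiv.injective e.toEquiv)

/-- Let `n ≥ 3` and let `C` be a class of `n`-vertex graphs closed under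
isomorphism, recognisable, and satisfying Kocay's lemma for a finite family
`𝔉 = (L_1, …, L_l)` of sequences of graphs with fewer than `n` vertices. Let `M`
be the matrix of covering numbers `c(L_i, H)`, with rows indexed by `Fin l` and
columns indexed by the isomorphism classes of graphs in `C` (a transversal `R`).
If `rank_ℝ(M) = |C/≅| = R.card`, then every graph in `C` is reconstructible:
for all `G, G' ∈ C`, if `G'` is a reconstruction of `G` then `G' ≅ G`. -/
theorem stmt_8 {n l : ℕ} (hn : 3 ≤ n) (C : Set (SimpleGraph (Fin n)))
    (hiso : ∀ G ∈ C, ∀ H, Nonempty (G ≃g H) → H ∈ C)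
    (hrecog : ∀ G ∈ C, ∀ H, IsReconstruction G H → H ∈ C)
    (𝔉 : Fin l → GSeq) (h𝔉 : ∀ i : Fin l, ∀ F ∈ 𝔉 i, F.1 < n)
    (R : Finset (SimpleGraph (Fin n))) (hR : IsIsoTransversal C R)
    (hKocay : ∀ i : Fin l, ∀ G ∈ C, ∀ G' ∈ C, IsReconstruction G G' →
      ∑ H ∈ R, coverCount (𝔉 i) H * subCount H G' =
        ∑ H ∈ R, coverCount (𝔉 i) H * subCount H G)
    (hrank : (Matrix.of fun (i : Fin l) (H : ↥R) =>
        ((coverCount (𝔉 i) (H : SimpleGraph (Fin n)) : ℝ))).rank = R.card) :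
    ∀ G ∈ C, ∀ G' ∈ C, IsReconstruction G G' → Nonempty (G' ≃g G) := by
  intro G hG G' hG' hrec
  set M : Matrix (Fin l) ↥R ℝ := Matrix.of fun (i : Fin l) (H : ↥R) =>
    ((coverCount (𝔉 i) (H : SimpleGraph (Fin n)) : ℝ)) with hM
  -- Step 1: mulVecLin of M is injective
  have hinj : Function.Injective M.mulVecLin := by
    rw [← LinearMap.ker_eq_bot]
    have h1 := LinearMap.finrank_range_add_finrank_ker M.mulVecLin
    rw [Module.finrank_fintype_fun_eq_card, Fintype.card_coe] at h1
    have h2 : Module.finrank ℝ (LinearMap.range M.mulVecLin) = R.card := hrank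
    rw [h2] at h1
    have h3 : Module.finrank ℝ (LinearMap.ker M.mulVecLin) = 0 := by omega
    exact Submodule.finrank_eq_zero.mp h3
  -- Step 2: the two subgraph-count vectors agree
  have hsub : ∀ H ∈ R, subCount H G' = subCount H G := by
    have heq : M.mulVecLin (fun H : ↥R => (subCount (H : SimpleGraph (Fin n)) G' : ℝ))
        = M.mulVecLin (fun H : ↥R => (subCount (H : SimpleGraph (Fin n)) G : ℝ)) := by
      funext i
      simp only [Matrix.mulVecLin_apply, Matrix.mulVec, dotProduct, hM,
        Matrix.of_apply]
      have hk := hKocay i G hG G' hG' hrec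
      have hk' := congrArg (Nat.cast : ℕ → ℝ) hk
      push_cast at hk'
      rw [← Finset.sum_coe_sort R, ← Finset.sum_coe_sort R] at hk'
      exact hk'
    have := hinj heq
    intro H hH
    have hH' := congrFun this ⟨H, hH⟩
    exact_mod_cast hH'
  -- Step 3: representatives of G and G' in R
  obtain ⟨HG, ⟨hHGmem, ⟨eG⟩⟩, _⟩ := hR.2 G hG
  obtain ⟨HG', ⟨hHG'mem, ⟨eG'⟩⟩, _⟩ := hR.2 G' hG'
  -- G' embeds (as subgraph) into G:
  have h1 : subCount HG' G ≠ 0 := by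
    rw [← hsub HG' hHG'mem]
    exact subCount_ne_zero ⟨eG'.symm⟩
  have h2 : subCount HG G' ≠ 0 := by
    rw [hsub HG hHGmem]
    exact subCount_ne_zero ⟨eG.symm⟩
  obtain ⟨f1, hf1⟩ := exists_hom_of_subCount h1   -- HG' →g G
  obtain ⟨f2, hf2⟩ := exists_hom_of_subCount h2   -- HG →g G'
  -- edge counts
  have hc1 : Nat.card HG'.edgeSet ≤ Nat.card G.edgeSet :=
    Nat.card_le_card_of_injective _ (Hom.mapEdgeSet.injective f1 hf1)
  have hc2 : Nat.card HG.edgeSet ≤ Nat.card G'.edgeSet :=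
    Nat.card_le_card_of_injective _ (Hom.mapEdgeSet.injective f2 hf2)
  have hcG : Nat.card G.edgeSet = Nat.card HG.edgeSet :=
    Nat.card_congr eG.mapEdgeSet
  have hcG' : Nat.card G'.edgeSet = Nat.card HG'.edgeSet :=
    Nat.card_congr eG'.mapEdgeSet
  have hcard : Nat.card G'.edgeSet = Nat.card G.edgeSet := by omega
  -- now build an injective hom G' →g G
  refine homIso (f1.comp eG'.toHom) ?_ hcard
  rw [Hom.coe_comp]
  exact Function.Injective.comp hf1 (Equiv.injective eG'.toEquiv)
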